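/- Let c be a real number and let k1,...,k5 be integers satisfying |k5|^(3/4) > 256·max(|k1|,|k2|,|k3|,|k4|), k1-k2+k3-k4 ≠ 0, and |k5| > 16·max(1, |c|). Then |Φ5_c(k1,...,k5)| ≥ |k1-k2+k3-k4|·|k5|^3, where Φ5_c(k1,...,k5) = φ_c(k1-k2+k3-k4+k5) - φ_c(k1) + φ_c(k2) - φ_c(k3) + φ_c(k4) - φ_c(k5) and φ_c(k) = k^4 + c·k^2. -/

import Mathlib

noncomputable def phi (c k : ℝ) : ℝ := k ^ 4 + c * k ^ 2

noncomputable def Phi5 (c k1 k2 k3 k4 k5 : ℝ) : ℝ :=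
  phi c (k1 - k2 + k3 - k4 + k5) - phi c k1 + phi c k2 - phi c k3 + phi c k4 - phi c k5

set_option maxHeartbeats 4000000
theorem stmt_10 (c : ℝ) (k1 k2 k3 k4 k5 : ℤ)
    (h1 : |(k5 : ℝ)| ^ ((3 : ℝ) / 4) >
      256 * max (max (max |(k1 : ℝ)| |(k2 : ℝ)|) |(k3 : ℝ)|) |(k4 : ℝ)|)
    (h2 : k1 - k2 + k3 - k4 ≠ 0)
    (hc : (|k5| : ℝ) > 16 * max 1 |c|) :
    |Phi5 c (k1 : ℝ) (k2 : ℝ) (k3 : ℝ) (k4 : ℝ) (k5 : ℝ)| ≥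
      |(k1 : ℝ) - (k2 : ℝ) + (k3 : ℝ) - (k4 : ℝ)| * |(k5 : ℝ)| ^ 3 := by
  set N : ℝ := (k5 : ℝ) with hN
  set A : ℝ := |N| with hA
  set M : ℝ := max (max (max |(k1 : ℝ)| |(k2 : ℝ)|) |(k3 : ℝ)|) |(k4 : ℝ)| with hM
  set m : ℝ := (k1 : ℝ) - (k2 : ℝ) + (k3 : ℝ) - (k4 : ℝ) with hm
  have hA0 : (0 : ℝ) ≤ A := abs_nonneg _
  have hM0 : (0 : ℝ) ≤ M := le_trans (abs_nonneg (k4 : ℝ)) (le_max_right _ _)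
  have hA16 : (16 : ℝ) < A := by
    have h := le_max_left (1 : ℝ) |c|
    nlinarith [hc]
  have hA1 : (1 : ℝ) ≤ A := by linarith
  have hcA : 16 * |c| ≤ A := by
    have h := le_max_right (1 : ℝ) |c|
    nlinarith [hc]
  have hc0 : (0 : ℝ) ≤ |c| := abs_nonneg _
  have hMA : 256 * M < A := by
    have h34 : A ^ ((3 : ℝ) / 4) ≤ A := by
      have := Real.rpow_le_rpow_of_exponent_le hA1 (by norm_num : (3:ℝ)/4 ≤ 1)
      rwa [Real.rpow_one] at this
    linarith [h1]
  have h4 : (256 * M) ^ 4 < A ^ 3 := by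
    have h0 : (0 : ℝ) ≤ 256 * M := by linarith
    have hp : (256 * M) ^ (4:ℕ) < (A ^ ((3:ℝ)/4)) ^ (4:ℕ) :=
      pow_lt_pow_left₀ h1 h0 (by norm_num)
    have he : (A ^ ((3:ℝ)/4)) ^ (4:ℕ) = A ^ 3 := by
      rw [← Real.rpow_natCast (A ^ ((3:ℝ)/4)) 4, ← Real.rpow_mul hA0,
        ← Real.rpow_natCast A 3]
      norm_num
    rwa [he] at hp
  have hk1 : |(k1 : ℝ)| ≤ M :=
    le_trans (le_max_left _ _) (le_trans (le_max_left _ _) (le_max_left _ _))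
  have hk2 : |(k2 : ℝ)| ≤ M :=
    le_trans (le_max_right _ _) (le_trans (le_max_left _ _) (le_max_left _ _))
  have hk3 : |(k3 : ℝ)| ≤ M := le_trans (le_max_right _ _) (le_max_left _ _)
  have hk4 : |(k4 : ℝ)| ≤ M := le_max_right _ _
  set a : ℝ := |m| with ha
  have ha0 : (0 : ℝ) ≤ a := abs_nonneg _
  have haM : a ≤ 4 * M := by
    have b1 := neg_abs_le (k1:ℝ); have b1' := le_abs_self (k1:ℝ)
    have b2 := neg_abs_le (k2:ℝ); have b2' := le_abs_self (k2:ℝ)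
    have b3 := neg_abs_le (k3:ℝ); have b3' := le_abs_self (k3:ℝ)
    have b4 := neg_abs_le (k4:ℝ); have b4' := le_abs_self (k4:ℝ)
    rcases abs_cases m with ⟨h, _⟩ | ⟨h, _⟩ <;>
      · rw [ha, h]; simp only [hm]; linarith
  have ha1 : (1 : ℝ) ≤ a := by
    have hz : ((k1 - k2 + k3 - k4 : ℤ) : ℝ) = m := by rw [hm]; push_cast; ring
    have hi : (1 : ℤ) ≤ |k1 - k2 + k3 - k4| := Int.one_le_abs h2
    calc (1:ℝ) ≤ |((k1 - k2 + k3 - k4 : ℤ) : ℝ)| := by exact_mod_cast hi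
      _ = a := by rw [hz]
  have ha64 : 64 * a ≤ A := by linarith
  set E : ℝ := 6*m^2*N^2 + 4*m^3*N + m^4 + c*(2*m*N + m^2)
      - ((k1:ℝ)^4 - (k2:ℝ)^4 + (k3:ℝ)^4 - (k4:ℝ)^4)
      - c*((k1:ℝ)^2 - (k2:ℝ)^2 + (k3:ℝ)^2 - (k4:ℝ)^2) with hE
  have hdec : Phi5 c (k1 : ℝ) (k2 : ℝ) (k3 : ℝ) (k4 : ℝ) N = 4*m*N^3 + E := by
    simp only [Phi5, phi, hE, hm]; ring
  have t1 : |6*m^2*N^2| ≤ (1/2) * (a * A^3) := by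
    rw [abs_mul, abs_mul, abs_pow, abs_pow, ← ha, ← hA,
      show |(6:ℝ)| = 6 by norm_num]
    nlinarith [mul_le_mul_of_nonneg_right ha64 (mul_nonneg (mul_nonneg ha0 hA0) hA0),
      mul_nonneg (mul_nonneg ha0 hA0) (mul_nonneg hA0 hA0)]
  have hsq : (64*a)*(64*a) ≤ A*A := mul_le_mul ha64 ha64 (by linarith) hA0
  have t2 : |4*m^3*N| ≤ (1/2) * (a * A^3) := by
    rw [abs_mul, abs_mul, abs_pow, ← ha, ← hA, show |(4:ℝ)| = 4 by norm_num]
    nlinarith [mul_le_mul_of_nonneg_right hsq (mul_nonneg ha0 hA0),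
      mul_nonneg (mul_nonneg ha0 hA0) (mul_nonneg hA0 hA0)]
  have t3 : |m^4| ≤ (1/2) * (a * A^3) := by
    rw [abs_pow, ← ha]
    have h3 : (64*a)*(64*a)*(64*a) ≤ A*A*A :=
      mul_le_mul hsq ha64 (by linarith) (mul_nonneg hA0 hA0)
    nlinarith [mul_le_mul_of_nonneg_left h3 ha0,
      mul_nonneg (mul_nonneg ha0 hA0) (mul_nonneg hA0 hA0)]
  have t4 : |c*(2*m*N + m^2)| ≤ (1/2) * (a * A^3) := by
    have hb : |2*m*N + m^2| ≤ 2*a*A + a^2 := by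
      calc |2*m*N + m^2| ≤ |2*m*N| + |m^2| := abs_add_le _ _
        _ = 2*a*A + a^2 := by
            rw [abs_mul, abs_mul, abs_pow, ← ha, ← hA]; norm_num
    calc |c*(2*m*N + m^2)| = |c| * |2*m*N + m^2| := abs_mul _ _
      _ ≤ |c| * (2*a*A + a^2) := mul_le_mul_of_nonneg_left hb hc0
      _ ≤ (1/2) * (a * A^3) := by
          nlinarith [mul_le_mul_of_nonneg_right hcA (mul_nonneg ha0 hA0),
            mul_le_mul_of_nonneg_left ha64 (mul_nonneg hc0 ha0),
            mul_le_mul_of_nonneg_right hA16.le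
              (mul_nonneg ha0 (mul_nonneg hA0 hA0)),
            mul_nonneg (mul_nonneg ha0 hA0) (mul_nonneg hA0 hA0),
            mul_nonneg (mul_nonneg hc0 ha0) hA0]
  have hM4 : ∀ x : ℝ, |x| ≤ M → |x^4| ≤ M^4 := fun x hx => by
    rw [abs_pow]; exact pow_le_pow_left₀ (abs_nonneg x) hx 4
  have hM2 : ∀ x : ℝ, |x| ≤ M → |x^2| ≤ M^2 := fun x hx => by
    rw [abs_pow]; exact pow_le_pow_left₀ (abs_nonneg x) hx 2
  have t5 : |(k1:ℝ)^4 - (k2:ℝ)^4 + (k3:ℝ)^4 - (k4:ℝ)^4| ≤ (1/2) * (a * A^3) := by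
    have hb : |(k1:ℝ)^4 - (k2:ℝ)^4 + (k3:ℝ)^4 - (k4:ℝ)^4| ≤ 4 * M^4 := by
      have b1 := hM4 _ hk1; have b2 := hM4 _ hk2
      have b3 := hM4 _ hk3; have b4 := hM4 _ hk4
      have c1 := neg_abs_le ((k1:ℝ)^4); have c1' := le_abs_self ((k1:ℝ)^4)
      have c2 := neg_abs_le ((k2:ℝ)^4); have c2' := le_abs_self ((k2:ℝ)^4)
      have c3 := neg_abs_le ((k3:ℝ)^4); have c3' := le_abs_self ((k3:ℝ)^4)
      have c4 := neg_abs_le ((k4:ℝ)^4); have c4' := le_abs_self ((k4:ℝ)^4)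
      rcases abs_cases ((k1:ℝ)^4 - (k2:ℝ)^4 + (k3:ℝ)^4 - (k4:ℝ)^4) with
        ⟨h, _⟩ | ⟨h, _⟩ <;> rw [h] <;> linarith
    nlinarith [h4, mul_le_mul_of_nonneg_left ha1
      (mul_nonneg (mul_nonneg hA0 hA0) hA0)]
  have t6 : |c*((k1:ℝ)^2 - (k2:ℝ)^2 + (k3:ℝ)^2 - (k4:ℝ)^2)| ≤ (1/2) * (a * A^3) := by
    have hb : |(k1:ℝ)^2 - (k2:ℝ)^2 + (k3:ℝ)^2 - (k4:ℝ)^2| ≤ 4 * M^2 := by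
      have b1 := hM2 _ hk1; have b2 := hM2 _ hk2
      have b3 := hM2 _ hk3; have b4 := hM2 _ hk4
      have c1 := neg_abs_le ((k1:ℝ)^2); have c1' := le_abs_self ((k1:ℝ)^2)
      have c2 := neg_abs_le ((k2:ℝ)^2); have c2' := le_abs_self ((k2:ℝ)^2)
      have c3 := neg_abs_le ((k3:ℝ)^2); have c3' := le_abs_self ((k3:ℝ)^2)
      have c4 := neg_abs_le ((k4:ℝ)^2); have c4' := le_abs_self ((k4:ℝ)^2)
      rcases abs_cases ((k1:ℝ)^2 - (k2:ℝ)^2 + (k3:ℝ)^2 - (k4:ℝ)^2) with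
        ⟨h, _⟩ | ⟨h, _⟩ <;> rw [h] <;> linarith
    have hMsq : (256*M)*(256*M) ≤ A*A := mul_le_mul hMA.le hMA.le (by linarith) hA0
    calc |c*((k1:ℝ)^2 - (k2:ℝ)^2 + (k3:ℝ)^2 - (k4:ℝ)^2)|
        = |c| * |(k1:ℝ)^2 - (k2:ℝ)^2 + (k3:ℝ)^2 - (k4:ℝ)^2| := abs_mul _ _
      _ ≤ |c| * (4 * M^2) := mul_le_mul_of_nonneg_left hb hc0
      _ ≤ (1/2) * (a * A^3) := by
          have F1 := mul_le_mul_of_nonneg_right hcA (mul_nonneg hM0 hM0)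
          have F2 := mul_le_mul_of_nonneg_left hMsq hA0
          have F3 := mul_le_mul_of_nonneg_left ha1 (mul_nonneg (mul_nonneg hA0 hA0) hA0)
          linarith [F1, F2, F3, mul_nonneg ha0 (mul_nonneg (mul_nonneg hA0 hA0) hA0)]
  have hEb : |E| ≤ 3 * (a * A^3) := by
    have u1 := le_abs_self (6*m^2*N^2); have v1 := neg_abs_le (6*m^2*N^2)
    have u2 := le_abs_self (4*m^3*N); have v2 := neg_abs_le (4*m^3*N)
    have u3 := le_abs_self (m^4); have v3 := neg_abs_le (m^4)
    have u4 := le_abs_self (c*(2*m*N + m^2)); have v4 := neg_abs_le (c*(2*m*N + m^2))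
    have u5 := le_abs_self ((k1:ℝ)^4 - (k2:ℝ)^4 + (k3:ℝ)^4 - (k4:ℝ)^4)
    have v5 := neg_abs_le ((k1:ℝ)^4 - (k2:ℝ)^4 + (k3:ℝ)^4 - (k4:ℝ)^4)
    have u6 := le_abs_self (c*((k1:ℝ)^2 - (k2:ℝ)^2 + (k3:ℝ)^2 - (k4:ℝ)^2))
    have v6 := neg_abs_le (c*((k1:ℝ)^2 - (k2:ℝ)^2 + (k3:ℝ)^2 - (k4:ℝ)^2))
    rcases abs_cases E with ⟨h, _⟩ | ⟨h, _⟩ <;>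
      · rw [h, hE]; linarith
  have hmain : |4*m*N^3| = 4*(a*A^3) := by
    rw [abs_mul, abs_mul, abs_pow, ← ha, ← hA, show |(4:ℝ)| = 4 by norm_num]
    ring
  have hkey : 4*(a*A^3) ≤ |Phi5 c (k1 : ℝ) (k2 : ℝ) (k3 : ℝ) (k4 : ℝ) N| + |E| := by
    calc 4*(a*A^3) = |4*m*N^3| := hmain.symm
      _ = |Phi5 c (k1 : ℝ) (k2 : ℝ) (k3 : ℝ) (k4 : ℝ) N - E| := by rw [hdec]; ring_nf
      _ ≤ |Phi5 c (k1 : ℝ) (k2 : ℝ) (k3 : ℝ) (k4 : ℝ) N| + |(-E)| := by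
          rw [sub_eq_add_neg]; exact abs_add_le _ _
      _ = |Phi5 c (k1 : ℝ) (k2 : ℝ) (k3 : ℝ) (k4 : ℝ) N| + |E| := by rw [abs_neg]
  linarith
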